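/- Let Φ'(r) = Σ_{k=1}^m c_k (b_k + r)^{(p_k−2)/2} with 1 ≤ p₁ ≤ … ≤ p_m, c_k > 0, and μ ≤ b_k ≤ 1/μ for all k, where μ ∈ (0,1). Then for every M ≥ 1 and σ ∈ ℝⁿ with 0 < |σ| ≤ M: C₁ (1 + |σ|)^{−1} ≤ Φ'(|σ|²) ≤ C₂ (1 + |σ|)^{−1}, where C₁ = c₁ μ^{p₁/2} and C₂ = √(2/μ) Σ_k c_k (1/μ + M²)^{(p_k−1)/2}. -/
import Mathlib


theorem stmt_4 (n m : ℕ) (hm : 1 ≤ m) (p b c : ℕ → ℝ)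
    (hp1 : 1 ≤ p 0) (hpmono : ∀ i j, i ≤ j → j < m → p i ≤ p j)
    (hc : ∀ k < m, 0 < c k)
    (μ : ℝ) (hμ : μ ∈ Set.Ioo (0 : ℝ) 1)
    (hbk : ∀ k < m, μ ≤ b k ∧ b k ≤ 1 / μ)
    (M : ℝ) (hM : 1 ≤ M)
    (σ : EuclideanSpace ℝ (Fin n)) (hσ : σ ≠ 0) (hσM : ‖σ‖ ≤ M) :
    c 0 * μ ^ (p 0 / 2) * (1 + ‖σ‖)⁻¹ ≤
      (∑ k ∈ Finset.range m, c k * (b k + ‖σ‖ ^ 2) ^ ((p k - 2) / 2)) ∧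
    (∑ k ∈ Finset.range m, c k * (b k + ‖σ‖ ^ 2) ^ ((p k - 2) / 2)) ≤
      (Real.sqrt (2 / μ) *
        ∑ k ∈ Finset.range m, c k * (1 / μ + M ^ 2) ^ ((p k - 1) / 2)) *
      (1 + ‖σ‖)⁻¹ := by
  obtain ⟨hμ0, hμ1⟩ := hμ
  have hs : 0 < ‖σ‖ := norm_pos_iff.mpr hσ
  set s := ‖σ‖ with hsdef
  have hs1 : (0:ℝ) < 1 + s := by linarith
  obtain ⟨hb0l, hb0u⟩ := hbk 0 hm
  have hc0 := hc 0 hm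
  have hxpos : ∀ k < m, (0:ℝ) < b k + s ^ 2 := by
    intro k hk
    have := (hbk k hk).1
    nlinarith [sq_nonneg s]
  constructor
  · -- lower bound
    have hx0 : (0:ℝ) < b 0 + s ^ 2 := hxpos 0 hm
    have key : μ ^ (p 0 / 2) ≤ (b 0 + s ^ 2) ^ ((p 0 - 2) / 2) * (1 + s) := by
      rcases le_or_gt 2 (p 0) with h2 | h2
      · -- exponent nonneg
        have he : (0:ℝ) ≤ (p 0 - 2) / 2 := by linarith
        have h1 : μ ^ (p 0 / 2) ≤ μ ^ ((p 0 - 2) / 2) :=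
          Real.rpow_le_rpow_of_exponent_ge hμ0 hμ1.le (by linarith)
        have h2' : μ ^ ((p 0 - 2) / 2) ≤ (b 0 + s ^ 2) ^ ((p 0 - 2) / 2) :=
          Real.rpow_le_rpow hμ0.le (by nlinarith [sq_nonneg s]) he
        have h3 : (b 0 + s ^ 2) ^ ((p 0 - 2) / 2) ≤
            (b 0 + s ^ 2) ^ ((p 0 - 2) / 2) * (1 + s) :=
          le_mul_of_one_le_right (Real.rpow_nonneg hx0.le _) (by linarith)
        linarith
      · rcases le_or_gt 1 (b 0 + s ^ 2) with hx1 | hx1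
        · -- 1 ≤ x, negative exponent
          have h12 : ((-(1:ℝ))/2) ≤ (p 0 - 2) / 2 := by linarith
          have hmono : (b 0 + s ^ 2) ^ ((-(1:ℝ))/2) ≤ (b 0 + s ^ 2) ^ ((p 0 - 2) / 2) :=
            Real.rpow_le_rpow_of_exponent_le hx1 h12
          have hsqx : (b 0 + s ^ 2) ^ ((-(1:ℝ))/2) = (Real.sqrt (b 0 + s ^ 2))⁻¹ := by
            rw [neg_div, Real.rpow_neg hx0.le, Real.sqrt_eq_rpow]
          have hsq_pos : 0 < Real.sqrt (b 0 + s ^ 2) := Real.sqrt_pos.mpr hx0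
          have hkey2 : μ ^ (p 0 / 2) * Real.sqrt (b 0 + s ^ 2) ≤ 1 + s := by
            have hμp : μ ^ (p 0 / 2) ≤ Real.sqrt μ := by
              rw [Real.sqrt_eq_rpow]
              exact Real.rpow_le_rpow_of_exponent_ge hμ0 hμ1.le (by linarith)
            have h4 : Real.sqrt μ * Real.sqrt (b 0 + s ^ 2) =
                Real.sqrt (μ * (b 0 + s ^ 2)) := (Real.sqrt_mul hμ0.le _).symm
            have h5 : μ * (b 0 + s ^ 2) ≤ (1 + s) ^ 2 := by
              have : μ * b 0 ≤ 1 := by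
                have := (le_div_iff₀ hμ0).mp hb0u
                linarith [this]
              nlinarith [sq_nonneg s, hμ1.le, hs.le]
            have h6 : Real.sqrt (μ * (b 0 + s ^ 2)) ≤ 1 + s := by
              calc Real.sqrt (μ * (b 0 + s ^ 2)) ≤ Real.sqrt ((1 + s) ^ 2) :=
                    Real.sqrt_le_sqrt h5
                _ = 1 + s := Real.sqrt_sq hs1.le
            calc μ ^ (p 0 / 2) * Real.sqrt (b 0 + s ^ 2)
                ≤ Real.sqrt μ * Real.sqrt (b 0 + s ^ 2) :=
                  mul_le_mul_of_nonneg_right hμp hsq_pos.le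
              _ = Real.sqrt (μ * (b 0 + s ^ 2)) := h4
              _ ≤ 1 + s := h6
          have : μ ^ (p 0 / 2) ≤ (Real.sqrt (b 0 + s ^ 2))⁻¹ * (1 + s) := by
            rw [inv_mul_eq_div, le_div_iff₀ hsq_pos]
            exact hkey2
          calc μ ^ (p 0 / 2) ≤ (Real.sqrt (b 0 + s ^ 2))⁻¹ * (1 + s) := this
            _ = (b 0 + s ^ 2) ^ ((-(1:ℝ))/2) * (1 + s) := by rw [hsqx]
            _ ≤ (b 0 + s ^ 2) ^ ((p 0 - 2) / 2) * (1 + s) :=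
                mul_le_mul_of_nonneg_right hmono hs1.le
        · -- x < 1, negative exponent
          have h1 : μ ^ (p 0 / 2) ≤ 1 :=
            Real.rpow_le_one hμ0.le hμ1.le (by linarith)
          have h2' : (1:ℝ) ≤ (b 0 + s ^ 2) ^ ((p 0 - 2) / 2) :=
            Real.one_le_rpow_of_pos_of_le_one_of_nonpos hx0 hx1.le (by linarith)
          nlinarith [Real.rpow_nonneg hx0.le ((p 0 - 2)/2)]
    have hterm : c 0 * μ ^ (p 0 / 2) * (1 + s)⁻¹ ≤
        c 0 * (b 0 + s ^ 2) ^ ((p 0 - 2) / 2) := by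
      have key' : μ ^ (p 0 / 2) * (1 + s)⁻¹ ≤ (b 0 + s ^ 2) ^ ((p 0 - 2) / 2) := by
        have := (div_le_iff₀ hs1).mpr key
        calc μ ^ (p 0 / 2) * (1 + s)⁻¹ = μ ^ (p 0 / 2) / (1 + s) := by ring
          _ ≤ (b 0 + s ^ 2) ^ ((p 0 - 2) / 2) := this
      calc c 0 * μ ^ (p 0 / 2) * (1 + s)⁻¹
          = c 0 * (μ ^ (p 0 / 2) * (1 + s)⁻¹) := by ring
        _ ≤ c 0 * (b 0 + s ^ 2) ^ ((p 0 - 2) / 2) :=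
            mul_le_mul_of_nonneg_left key' hc0.le
    calc c 0 * μ ^ (p 0 / 2) * (1 + s)⁻¹
        ≤ c 0 * (b 0 + s ^ 2) ^ ((p 0 - 2) / 2) := hterm
      _ ≤ ∑ k ∈ Finset.range m, c k * (b k + s ^ 2) ^ ((p k - 2) / 2) := by
          apply Finset.single_le_sum (f := fun k => c k * (b k + s ^ 2) ^ ((p k - 2) / 2))
          · intro k hk
            have hk' := Finset.mem_range.mp hk
            exact mul_nonneg (hc k hk').le (Real.rpow_nonneg (hxpos k hk').le _)
          · exact Finset.mem_range.mpr hm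
  · -- upper bound
    rw [Finset.mul_sum, Finset.sum_mul]
    apply Finset.sum_le_sum
    intro k hk
    have hk' := Finset.mem_range.mp hk
    have hck := hc k hk'
    obtain ⟨hbl, hbu⟩ := hbk k hk'
    have hx0 : (0:ℝ) < b k + s ^ 2 := hxpos k hk'
    have hpk1 : 1 ≤ p k := hp1.trans (hpmono 0 k (Nat.zero_le k) hk')
    have hA0 : (0:ℝ) < 1 / μ + M ^ 2 := by positivity
    -- key : (1 + s) * x ^ e ≤ √(2/μ) * A
    have h2μ : (0:ℝ) < 2 / μ := by positivity
    have h1s : (1 + s) ≤ Real.sqrt (2 / μ) * Real.sqrt (b k + s ^ 2) := by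
      rw [← Real.sqrt_mul h2μ.le]
      have h5 : (1 + s) ^ 2 ≤ 2 / μ * (b k + s ^ 2) := by
        rw [div_mul_eq_mul_div, le_div_iff₀ hμ0]
        nlinarith [sq_nonneg (1 - s), hμ1.le]
      calc 1 + s = Real.sqrt ((1 + s) ^ 2) := (Real.sqrt_sq hs1.le).symm
        _ ≤ Real.sqrt (2 / μ * (b k + s ^ 2)) := Real.sqrt_le_sqrt h5
    have hkey : (1 + s) * (b k + s ^ 2) ^ ((p k - 2) / 2) ≤
        Real.sqrt (2 / μ) * (1 / μ + M ^ 2) ^ ((p k - 1) / 2) := by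
      have hmul : Real.sqrt (b k + s ^ 2) * (b k + s ^ 2) ^ ((p k - 2) / 2) =
          (b k + s ^ 2) ^ ((p k - 1) / 2) := by
        rw [Real.sqrt_eq_rpow, ← Real.rpow_add hx0]
        congr 1
        ring
      have hbase : (b k + s ^ 2) ^ ((p k - 1) / 2) ≤ (1 / μ + M ^ 2) ^ ((p k - 1) / 2) := by
        apply Real.rpow_le_rpow hx0.le _ (by linarith)
        have : s ^ 2 ≤ M ^ 2 := by nlinarith
        linarith
      calc (1 + s) * (b k + s ^ 2) ^ ((p k - 2) / 2)
          ≤ (Real.sqrt (2 / μ) * Real.sqrt (b k + s ^ 2)) *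
              (b k + s ^ 2) ^ ((p k - 2) / 2) :=
            mul_le_mul_of_nonneg_right h1s (Real.rpow_nonneg hx0.le _)
        _ = Real.sqrt (2 / μ) *
              (Real.sqrt (b k + s ^ 2) * (b k + s ^ 2) ^ ((p k - 2) / 2)) := by ring
        _ = Real.sqrt (2 / μ) * (b k + s ^ 2) ^ ((p k - 1) / 2) := by rw [hmul]
        _ ≤ Real.sqrt (2 / μ) * (1 / μ + M ^ 2) ^ ((p k - 1) / 2) :=
            mul_le_mul_of_nonneg_left hbase (Real.sqrt_nonneg _)
    rw [← le_div_iff₀' hs1] at hkey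
    calc c k * (b k + s ^ 2) ^ ((p k - 2) / 2)
        ≤ c k * (Real.sqrt (2 / μ) * (1 / μ + M ^ 2) ^ ((p k - 1) / 2) / (1 + s)) :=
          mul_le_mul_of_nonneg_left hkey hck.le
      _ = Real.sqrt (2 / μ) * (c k * (1 / μ + M ^ 2) ^ ((p k - 1) / 2)) * (1 + s)⁻¹ := by
          ring
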